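/- Let I ⊆ ℝ be an open interval, let f, h : I → ℝ be smooth with f nowhere zero, let ε ∈ ℝ, let A : ℝ → ℝ be smooth, let H : I → ℝ be smooth with H′ = h, let Y : I → ℝ be smooth with Y′(x) = e^{−εH(x)}, and let 𝔄 : ℝ → ℝ be smooth with 𝔄′ = A. Then for every smooth solution u : ℝ × I → ℝ of the equation f(x)u_t = (A(u)u_x)_x + ε h(x)A(u)u_x (the case B = εA), both pairs F₁ = e^{εH(x)}f(x)u, G₁ = −e^{εH(x)}A(u)u_x and F₂ = Y(x)e^{εH(x)}f(x)u, G₂ = −Y(x)e^{εH(x)}A(u)u_x + 𝔄(u) satisfy the conservation-law identity ∂_t F + ∂_x G = 0 at every point of ℝ × I. -/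

import Mathlib

open Set Real
open scoped ContDiff

/-- For the equation `f(x) u_t = (A(u) u_x)_x + ε h(x) A(u) u_x`
(the case `B = ε A`), with `H' = h`, `Y' = e^{-εH}` and `𝔄' = A`, both pairs
`F₁ = e^{εH(x)} f(x) u`, `G₁ = -e^{εH(x)} A(u) u_x` and
`F₂ = Y(x) e^{εH(x)} f(x) u`, `G₂ = -Y(x) e^{εH(x)} A(u) u_x + 𝔄(u)` are
conserved vectors. -/
theorem conservation_laws_case_B_eps_A
    (I : Set ℝ) (hIopen : IsOpen I) (hIconn : Convex ℝ I)
    (f h : ℝ → ℝ) (hf : ContDiffOn ℝ ∞ f I) (hf0 : ∀ x ∈ I, f x ≠ 0)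
    (hh : ContDiffOn ℝ ∞ h I)
    (ε : ℝ) (A FA : ℝ → ℝ) (hA : ContDiff ℝ ∞ A)
    (hFA : ContDiff ℝ ∞ FA) (hFA' : ∀ v : ℝ, HasDerivAt FA (A v) v)
    (H Y : ℝ → ℝ) (hH : ContDiffOn ℝ ∞ H I) (hY : ContDiffOn ℝ ∞ Y I)
    (hH' : ∀ x ∈ I, HasDerivAt H (h x) x)
    (hY' : ∀ x ∈ I, HasDerivAt Y (Real.exp (-(ε * H x))) x)
    (u : ℝ → ℝ → ℝ)
    (hu : ContDiffOn ℝ ∞ (fun p : ℝ × ℝ => u p.1 p.2) (univ ×ˢ I))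
    (hpde : ∀ t : ℝ, ∀ x ∈ I,
      f x * deriv (fun s => u s x) t
        = deriv (fun y => A (u t y) * deriv (fun z => u t z) y) x
          + ε * h x * A (u t x) * deriv (fun y => u t y) x) :
    ∀ t : ℝ, ∀ x ∈ I,
      (deriv (fun s => Real.exp (ε * H x) * f x * u s x) t
        + deriv (fun y =>
            -(Real.exp (ε * H y) * A (u t y) * deriv (fun z => u t z) y)) x = 0)
      ∧ (deriv (fun s => Y x * Real.exp (ε * H x) * f x * u s x) t
        + deriv (fun y =>
            -(Y y * Real.exp (ε * H y) * A (u t y) * deriv (fun z => u t z) y)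
              + FA (u t y)) x = 0) := by
  intro t x hx
  have hprod : IsOpen ((univ : Set ℝ) ×ˢ I) := isOpen_univ.prod hIopen
  have hmem : (t, x) ∈ (univ : Set ℝ) ×ˢ I := ⟨mem_univ t, hx⟩
  -- smoothness of x ↦ u t x on I
  have hU : ContDiffOn ℝ ∞ (fun y => u t y) I := by
    have : ContDiffOn ℝ ∞ (fun y : ℝ => ((t, y) : ℝ × ℝ)) I :=
      (contDiff_const.prodMk contDiff_id).contDiffOn
    exact hu.comp this (fun y hy => ⟨mem_univ t, hy⟩)
  have hUderiv : ContDiffOn ℝ ∞ (deriv (fun y => u t y)) I :=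
    hU.deriv_of_isOpen hIopen (by simp)
  -- derivative of x ↦ u t x at x
  have hux : HasDerivAt (fun z => u t z) (deriv (fun z => u t z) x) x :=
    ((hU.differentiableOn (by simp)).differentiableAt (hIopen.mem_nhds hx)).hasDerivAt
  set ux : ℝ := deriv (fun z => u t z) x with hux_def
  -- the flux w = A(u) u_x is smooth in x, so differentiable at x
  have hw : ContDiffOn ℝ ∞ (fun y => A (u t y) * deriv (fun z => u t z) y) I :=
    ((hA.comp_contDiffOn hU).mul hUderiv)
  have hw' : HasDerivAt (fun y => A (u t y) * deriv (fun z => u t z) y)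
      (deriv (fun y => A (u t y) * deriv (fun z => u t z) y) x) x :=
    ((hw.differentiableOn (by simp)).differentiableAt (hIopen.mem_nhds hx)).hasDerivAt
  set W : ℝ := deriv (fun y => A (u t y) * deriv (fun z => u t z) y) x with hW_def
  -- derivative in t
  have hut : HasDerivAt (fun s => u s x) (deriv (fun s => u s x) t) t := by
    have h1 : DifferentiableAt ℝ (fun p : ℝ × ℝ => u p.1 p.2) (t, x) :=
      (hu.contDiffAt (hprod.mem_nhds hmem)).differentiableAt (by simp)
    have h2 : DifferentiableAt ℝ (fun s : ℝ => ((s, x) : ℝ × ℝ)) t :=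
      (differentiable_id.prodMk (differentiable_const x)).differentiableAt
    exact (h1.comp t h2).hasDerivAt
  set ut : ℝ := deriv (fun s => u s x) t with hut_def
  -- exponential factor
  have hexp : HasDerivAt (fun y => Real.exp (ε * H y))
      (Real.exp (ε * H x) * (ε * h x)) x := ((hH' x hx).const_mul ε).exp
  set E : ℝ := Real.exp (ε * H x) with hE_def
  have hpde' := hpde t x hx
  rw [← hW_def, ← hux_def, ← hut_def] at hpde'
  constructor
  · -- first conservation law
    have hdt : deriv (fun s => Real.exp (ε * H x) * f x * u s x) t
        = E * f x * ut := by
      have := (hut.const_mul (Real.exp (ε * H x) * f x)).deriv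
      exact this
    have hdx : deriv (fun y =>
        -(Real.exp (ε * H y) * A (u t y) * deriv (fun z => u t z) y)) x
        = -(E * (ε * h x) * (A (u t x) * ux) + E * W) := by
      have h3 : HasDerivAt (fun y =>
          -(Real.exp (ε * H y) * (A (u t y) * deriv (fun z => u t z) y)))
          (-(E * (ε * h x) * (A (u t x) * ux) + E * W)) x := by
        have := (hexp.mul hw').neg
        convert this using 1 <;> rfl
      have h4 : (fun y =>
          -(Real.exp (ε * H y) * A (u t y) * deriv (fun z => u t z) y))
          = (fun y =>
          -(Real.exp (ε * H y) * (A (u t y) * deriv (fun z => u t z) y))) := by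
        funext y; ring
      rw [h4]
      exact h3.deriv
    rw [hdt, hdx]
    linear_combination E * hpde'
  · -- second conservation law
    have hdt : deriv (fun s => Y x * Real.exp (ε * H x) * f x * u s x) t
        = Y x * E * f x * ut := by
      have := (hut.const_mul (Y x * Real.exp (ε * H x) * f x)).deriv
      exact this
    have hfa : HasDerivAt (fun y => FA (u t y)) (A (u t x) * ux) x :=
      (hFA' (u t x)).comp x hux
    have hdx : deriv (fun y =>
        -(Y y * Real.exp (ε * H y) * A (u t y) * deriv (fun z => u t z) y)
          + FA (u t y)) x
        = -(Real.exp (-(ε * H x)) * E * (A (u t x) * ux)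
            + Y x * (E * (ε * h x)) * (A (u t x) * ux) + Y x * E * W)
          + A (u t x) * ux := by
      have h3 : HasDerivAt (fun y =>
          -(Y y * (Real.exp (ε * H y) * (A (u t y) * deriv (fun z => u t z) y)))
            + FA (u t y))
          (-(Real.exp (-(ε * H x)) * E * (A (u t x) * ux)
            + Y x * (E * (ε * h x)) * (A (u t x) * ux) + Y x * E * W)
          + A (u t x) * ux) x := by
        have := (((hY' x hx).mul (hexp.mul hw')).neg).add hfa
        convert this using 1
        · rfl
        · rfl
        · rfl
        · simp only [hE_def, hux_def, Pi.mul_apply]; ring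
      have h4 : (fun y =>
          -(Y y * Real.exp (ε * H y) * A (u t y) * deriv (fun z => u t z) y)
            + FA (u t y))
          = (fun y =>
          -(Y y * (Real.exp (ε * H y) * (A (u t y) * deriv (fun z => u t z) y)))
            + FA (u t y)) := by
        funext y; ring
      rw [h4]
      exact h3.deriv
    rw [hdt, hdx]
    have hEE : Real.exp (-(ε * H x)) * E = 1 := by
      rw [hE_def, ← Real.exp_add]; simp
    linear_combination (Y x * E) * hpde' - (A (u t x) * ux) * hEE
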